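/- arXiv:2603.21407 — 4 statements merged into one kernel-verified Lean document; each statement's English description precedes it below -/
import Mathlib

section
/- Let (u_n) be a sequence in [0,1) and v ∈ [0,∞) such that (1-u_n)^n → e^{-v} as n → ∞. Then u_n → 0 and n·u_n → v. -/
open Filter Real

theorem stmt0 (u : ℕ → ℝ) (v : ℝ)
    (hu : ∀ n, u n ∈ Set.Ico (0 : ℝ) 1) (hv : 0 ≤ v)
    (h : Tendsto (fun n => (1 - u n) ^ n) atTop (nhds (Real.exp (-v)))) :
    Tendsto u atTop (nhds 0) ∧
      Tendsto (fun n : ℕ => (n : ℝ) * u n) atTop (nhds v) := by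
  have hpos : ∀ n, 0 < 1 - u n := fun n => by have := (hu n).2; linarith
  -- upper log inequality : log (1-u) ≤ -u
  have hub : ∀ n, u n ≤ -Real.log (1 - u n) := by
    intro n
    have := Real.log_le_sub_one_of_pos (hpos n)
    linarith
  -- lower log inequality : (1-u) * (-log(1-u)) ≤ u
  have hlb : ∀ n, (1 - u n) * (-Real.log (1 - u n)) ≤ u n := by
    intro n
    have h1 := Real.log_le_sub_one_of_pos (inv_pos.mpr (hpos n))
    rw [Real.log_inv] at h1
    have h2 : -Real.log (1 - u n) ≤ (1 - u n)⁻¹ - 1 := h1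
    have h3 : (1 - u n) * ((1 - u n)⁻¹ - 1) = u n := by
      rw [mul_sub, mul_inv_cancel₀ (hpos n).ne']; ring
    calc (1 - u n) * (-Real.log (1 - u n)) ≤ (1 - u n) * ((1 - u n)⁻¹ - 1) := by
          apply mul_le_mul_of_nonneg_left h2 (hpos n).le
      _ = u n := h3
  -- n * log (1 - u n) → -v
  have hL : Tendsto (fun n : ℕ => (n : ℝ) * Real.log (1 - u n)) atTop (nhds (-v)) := by
    have hc := (Real.continuousAt_log (Real.exp_pos (-v)).ne').tendsto.comp h
    rw [Real.log_exp] at hc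
    have : (fun n : ℕ => (n : ℝ) * Real.log (1 - u n)) =
        (Real.log ∘ fun n => (1 - u n) ^ n) := by
      funext n
      simp [Function.comp, Real.log_pow]
    rw [this]
    exact hc
  have hnL : Tendsto (fun n : ℕ => -((n : ℝ) * Real.log (1 - u n))) atTop (nhds v) := by
    simpa using hL.neg
  -- -log (1 - u n) → 0
  have hlog0 : Tendsto (fun n : ℕ => -Real.log (1 - u n)) atTop (nhds 0) := by
    have hinv : Tendsto (fun n : ℕ => ((n : ℝ))⁻¹) atTop (nhds 0) :=
      tendsto_inv_atTop_zero.comp tendsto_natCast_atTop_atTop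
    have hmul := hnL.mul hinv
    rw [mul_zero] at hmul
    apply hmul.congr'
    filter_upwards [eventually_ge_atTop 1] with n hn
    have hn0 : (n : ℝ) ≠ 0 := by positivity
    field_simp
  -- u → 0
  have hu0 : Tendsto u atTop (nhds 0) := by
    apply squeeze_zero (fun n => (hu n).1) hub hlog0
  constructor
  · exact hu0
  -- squeeze for n * u n
  · have hone : Tendsto (fun n : ℕ => 1 - u n) atTop (nhds 1) := by
      have := (tendsto_const_nhds : Tendsto (fun _ : ℕ => (1:ℝ)) atTop (nhds 1)).sub hu0
      simpa using this
    have hlow : Tendsto (fun n : ℕ => (1 - u n) * -((n : ℝ) * Real.log (1 - u n)))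
        atTop (nhds v) := by
      have := hone.mul hnL
      simpa using this
    refine tendsto_of_tendsto_of_tendsto_of_le_of_le hlow hnL ?_ ?_
    · intro n
      have := mul_le_mul_of_nonneg_left (hlb n) (Nat.cast_nonneg n : (0:ℝ) ≤ n)
      calc (1 - u n) * -((n : ℝ) * Real.log (1 - u n))
          = (n : ℝ) * ((1 - u n) * (-Real.log (1 - u n))) := by ring
        _ ≤ (n : ℝ) * u n := this
    · intro n
      have := mul_le_mul_of_nonneg_left (hub n) (Nat.cast_nonneg n : (0:ℝ) ≤ n)
      calc (n : ℝ) * u n ≤ (n : ℝ) * -Real.log (1 - u n) := this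
        _ = -((n : ℝ) * Real.log (1 - u n)) := by ring
end

section
/- Let p ≥ 1. Let U₁, U₂ be real random variables with laws μ₁, μ₂ having finite p-th moments, and let V be a random variable with values in a measurable space 𝒱, independent of (U₁,U₂). Let φ : ℝ × 𝒱 → ℝ be measurable with |φ(u,v) - φ(u',v)| ≤ L(v)·|u - u'| for all u,u',v, where L : 𝒱 → [0,∞) is measurable with E[L(V)^p] < ∞. Then W_p(law(φ(U₁,V)), law(φ(U₂,V))) ≤ (E[L(V)^p])^{1/p} · W_p(μ₁, μ₂). -/
open MeasureTheory Real

/-- Wasserstein-`p` distance on `ℝ`, defined as the infimum over couplings of the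
`p`-th root of the transport cost. -/
noncomputable def Wp (p : ℝ) (μ ν : Measure ℝ) : ℝ :=
  sInf {c : ℝ | ∃ P : Measure (ℝ × ℝ), IsProbabilityMeasure P ∧
    P.map Prod.fst = μ ∧ P.map Prod.snd = ν ∧
    c = (∫ z, |z.1 - z.2| ^ p ∂P) ^ (1 / p)}

open ProbabilityTheory

private lemma abs_sub_rpow_le (p : ℝ) (hp : 1 ≤ p) (a b : ℝ) :
    |a - b| ^ p ≤ 2 ^ p * (|a| ^ p + |b| ^ p) := by
  have hp0 : 0 ≤ p := le_trans zero_le_one hp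
  have h1 : |a - b| ≤ 2 * max |a| |b| := by
    calc |a - b| ≤ |a| + |b| := abs_sub a b
    _ ≤ 2 * max |a| |b| := by
      rcases le_total |a| |b| with h | h
      · rw [max_eq_right h]; linarith
      · rw [max_eq_left h]; linarith
  have h2 : |a - b| ^ p ≤ (2 * max |a| |b|) ^ p :=
    Real.rpow_le_rpow (abs_nonneg _) h1 hp0
  have hm : (0:ℝ) ≤ max |a| |b| := le_max_of_le_left (abs_nonneg a)
  have h3 : (2 * max |a| |b|) ^ p = 2 ^ p * (max |a| |b|) ^ p :=
    Real.mul_rpow (by norm_num) hm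
  have h4 : (max |a| |b|) ^ p ≤ |a| ^ p + |b| ^ p := by
    rcases le_total |a| |b| with h | h
    · rw [max_eq_right h]
      have : (0:ℝ) ≤ |a| ^ p := Real.rpow_nonneg (abs_nonneg a) p
      linarith
    · rw [max_eq_left h]
      have : (0:ℝ) ≤ |b| ^ p := Real.rpow_nonneg (abs_nonneg b) p
      linarith
  calc |a - b| ^ p ≤ 2 ^ p * (max |a| |b|) ^ p := by rw [← h3]; exact h2
  _ ≤ 2 ^ p * (|a| ^ p + |b| ^ p) := by
    have : (0:ℝ) ≤ (2:ℝ) ^ p := Real.rpow_nonneg (by norm_num) p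
    nlinarith

theorem stmt11 {Ω : Type*} [MeasurableSpace Ω] (μ : Measure Ω) [IsProbabilityMeasure μ]
    {V' : Type*} [MeasurableSpace V']
    (p : ℝ) (hp : 1 ≤ p)
    (U₁ U₂ : Ω → ℝ) (V : Ω → V')
    (hU₁ : Measurable U₁) (hU₂ : Measurable U₂) (hV : Measurable V)
    (hmom₁ : Integrable (fun ω => |U₁ ω| ^ p) μ)
    (hmom₂ : Integrable (fun ω => |U₂ ω| ^ p) μ)
    (hindep : IndepFun (fun ω => (U₁ ω, U₂ ω)) V μ)
    (φ : ℝ × V' → ℝ) (hφ : Measurable φ)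
    (L : V' → ℝ) (hL : Measurable L) (hLpos : ∀ v, 0 ≤ L v)
    (hLip : ∀ (u u' : ℝ) (v : V'), |φ (u, v) - φ (u', v)| ≤ L v * |u - u'|)
    (hLmom : Integrable (fun ω => L (V ω) ^ p) μ) :
    Wp p (μ.map fun ω => φ (U₁ ω, V ω)) (μ.map fun ω => φ (U₂ ω, V ω))
      ≤ (∫ ω, L (V ω) ^ p ∂μ) ^ (1 / p) * Wp p (μ.map U₁) (μ.map U₂) := by
  have hp0 : 0 < p := lt_of_lt_of_le zero_lt_one hp
  have hp0' : (0:ℝ) ≤ 1 / p := by positivity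
  set μ₁ := μ.map U₁ with hμ₁def
  set μ₂ := μ.map U₂ with hμ₂def
  set ν := μ.map V with hνdef
  have hprob₁ : IsProbabilityMeasure μ₁ := Measure.isProbabilityMeasure_map hU₁.aemeasurable
  have hprobν : IsProbabilityMeasure ν := Measure.isProbabilityMeasure_map hV.aemeasurable
  -- measurability of rpow funcs
  have hmabs : Measurable (fun u : ℝ => |u| ^ p) :=
    (measurable_id.abs).pow measurable_const
  have hmL : Measurable (fun v : V' => L v ^ p) := hL.pow measurable_const
  -- L^p integral over ν
  have hLν : ∫ v, L v ^ p ∂ν = ∫ ω, L (V ω) ^ p ∂μ :=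
    integral_map hV.aemeasurable hmL.aestronglyMeasurable
  have hLνint : Integrable (fun v => L v ^ p) ν :=
    (integrable_map_measure hmL.aestronglyMeasurable hV.aemeasurable).mpr hLmom
  have hIL0 : (0:ℝ) ≤ ∫ ω, L (V ω) ^ p ∂μ :=
    integral_nonneg fun ω => Real.rpow_nonneg (hLpos _) p
  set K := (∫ ω, L (V ω) ^ p ∂μ) ^ (1 / p) with hKdef
  have hK0 : 0 ≤ K := Real.rpow_nonneg hIL0 _
  -- integrability of |u|^p under marginals
  have hμ₁int : Integrable (fun u => |u| ^ p) μ₁ :=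
    (integrable_map_measure hmabs.aestronglyMeasurable hU₁.aemeasurable).mpr hmom₁
  have hμ₂int : Integrable (fun u => |u| ^ p) μ₂ :=
    (integrable_map_measure hmabs.aestronglyMeasurable hU₂.aemeasurable).mpr hmom₂
  -- independence consequences
  have hind1 : IndepFun U₁ V μ := hindep.comp measurable_fst measurable_id
  have hind2 : IndepFun U₂ V μ := hindep.comp measurable_snd measurable_id
  have hmap1 : μ.map (fun ω => (U₁ ω, V ω)) = μ₁.prod ν :=
    (indepFun_iff_map_prod_eq_prod_map_map hU₁.aemeasurable hV.aemeasurable).mp hind1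
  have hmap2 : μ.map (fun ω => (U₂ ω, V ω)) = μ₂.prod ν :=
    (indepFun_iff_map_prod_eq_prod_map_map hU₂.aemeasurable hV.aemeasurable).mp hind2
  have htarget1 : μ.map (fun ω => φ (U₁ ω, V ω)) = (μ₁.prod ν).map φ := by
    rw [← hmap1, Measure.map_map hφ (hU₁.prodMk hV)]
    rfl
  have htarget2 : μ.map (fun ω => φ (U₂ ω, V ω)) = (μ₂.prod ν).map φ := by
    rw [← hmap2, Measure.map_map hφ (hU₂.prodMk hV)]
    rfl
  -- the sets
  set S₁ := {c : ℝ | ∃ P : Measure (ℝ × ℝ), IsProbabilityMeasure P ∧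
    P.map Prod.fst = μ.map (fun ω => φ (U₁ ω, V ω)) ∧
    P.map Prod.snd = μ.map (fun ω => φ (U₂ ω, V ω)) ∧
    c = (∫ z, |z.1 - z.2| ^ p ∂P) ^ (1 / p)} with hS₁def
  have hS₁bdd : BddBelow S₁ := by
    refine ⟨0, fun c hc => ?_⟩
    obtain ⟨P, _, _, _, rfl⟩ := hc
    exact Real.rpow_nonneg
      (integral_nonneg fun z => Real.rpow_nonneg (abs_nonneg _) p) _
  -- key step: for any coupling P of (μ₁, μ₂), Wp LHS ≤ K * c(P)
  have key : ∀ c ∈ {c : ℝ | ∃ P : Measure (ℝ × ℝ), IsProbabilityMeasure P ∧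
      P.map Prod.fst = μ₁ ∧ P.map Prod.snd = μ₂ ∧
      c = (∫ z, |z.1 - z.2| ^ p ∂P) ^ (1 / p)},
      Wp p (μ.map (fun ω => φ (U₁ ω, V ω))) (μ.map (fun ω => φ (U₂ ω, V ω))) ≤ K * c := by
    rintro c ⟨P, hPprob, hP1, hP2, rfl⟩
    -- the transported coupling
    set Ψ : (ℝ × ℝ) × V' → ℝ × ℝ :=
      fun x => (φ (x.1.1, x.2), φ (x.1.2, x.2)) with hΨdef
    have hΨm : Measurable Ψ :=
      (hφ.comp ((measurable_fst.comp measurable_fst).prodMk measurable_snd)).prodMk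
        (hφ.comp ((measurable_snd.comp measurable_fst).prodMk measurable_snd))
    set Q := (P.prod ν).map Ψ with hQdef
    have hQprob : IsProbabilityMeasure Q := Measure.isProbabilityMeasure_map hΨm.aemeasurable
    -- marginals of Q
    have hQ1 : Q.map Prod.fst = μ.map (fun ω => φ (U₁ ω, V ω)) := by
      rw [htarget1, hQdef, Measure.map_map measurable_fst hΨm]
      have : (Prod.fst ∘ Ψ) = φ ∘ (Prod.map (Prod.fst : ℝ × ℝ → ℝ) (id : V' → V')) := rfl
      rw [this, ← Measure.map_map hφ (measurable_fst.prodMap measurable_id),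
        ← Measure.map_prod_map _ _ measurable_fst measurable_id, hP1, Measure.map_id]
    have hQ2 : Q.map Prod.snd = μ.map (fun ω => φ (U₂ ω, V ω)) := by
      rw [htarget2, hQdef, Measure.map_map measurable_snd hΨm]
      have : (Prod.snd ∘ Ψ) = φ ∘ (Prod.map (Prod.snd : ℝ × ℝ → ℝ) (id : V' → V')) := rfl
      rw [this, ← Measure.map_map hφ (measurable_snd.prodMap measurable_id),
        ← Measure.map_prod_map _ _ measurable_snd measurable_id, hP2, Measure.map_id]
    -- integrability of the distance on P
    have hPint : Integrable (fun z : ℝ × ℝ => |z.1 - z.2| ^ p) P := by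
      have h1 : Integrable (fun z : ℝ × ℝ => |z.1| ^ p) P := by
        have := (integrable_map_measure hmabs.aestronglyMeasurable
          measurable_fst.aemeasurable).mp (hP1 ▸ hμ₁int)
        exact this
      have h2 : Integrable (fun z : ℝ × ℝ => |z.2| ^ p) P := by
        have := (integrable_map_measure hmabs.aestronglyMeasurable
          measurable_snd.aemeasurable).mp (hP2 ▸ hμ₂int)
        exact this
      refine Integrable.mono' (((h1.add h2).const_mul ((2:ℝ) ^ p)))
        ((((measurable_fst.sub measurable_snd).abs).pow measurable_const).aestronglyMeasurable)
        (Filter.Eventually.of_forall fun z => ?_)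
      rw [Real.norm_eq_abs, abs_of_nonneg (Real.rpow_nonneg (abs_nonneg _) p)]
      exact abs_sub_rpow_le p hp z.1 z.2
    have hIP0 : (0:ℝ) ≤ ∫ z, |z.1 - z.2| ^ p ∂P :=
      integral_nonneg fun z => Real.rpow_nonneg (abs_nonneg _) p
    -- the cost of Q
    have hcostm : Measurable (fun z : ℝ × ℝ => |z.1 - z.2| ^ p) :=
      ((measurable_fst.sub measurable_snd).abs).pow measurable_const
    have hcost : ∫ z, |z.1 - z.2| ^ p ∂Q
        = ∫ x, |φ (x.1.1, x.2) - φ (x.1.2, x.2)| ^ p ∂(P.prod ν) := by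
      rw [hQdef, integral_map hΨm.aemeasurable hcostm.aestronglyMeasurable]
    have hmaj : Integrable (fun x : (ℝ × ℝ) × V' => |x.1.1 - x.1.2| ^ p * L x.2 ^ p)
        (P.prod ν) := hPint.mul_prod hLνint
    have hbound : ∫ z, |z.1 - z.2| ^ p ∂Q
        ≤ (∫ z, |z.1 - z.2| ^ p ∂P) * (∫ v, L v ^ p ∂ν) := by
      rw [hcost, ← integral_prod_mul]
      refine integral_mono_of_nonneg
        (Filter.Eventually.of_forall fun x => Real.rpow_nonneg (abs_nonneg _) p) hmaj
        (Filter.Eventually.of_forall fun x => ?_)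
      have h1 : |φ (x.1.1, x.2) - φ (x.1.2, x.2)| ^ p ≤ (L x.2 * |x.1.1 - x.1.2|) ^ p :=
        Real.rpow_le_rpow (abs_nonneg _) (hLip _ _ _) (le_of_lt hp0)
      calc |φ (x.1.1, x.2) - φ (x.1.2, x.2)| ^ p
          ≤ (L x.2 * |x.1.1 - x.1.2|) ^ p := h1
        _ = |x.1.1 - x.1.2| ^ p * L x.2 ^ p := by
            rw [Real.mul_rpow (hLpos _) (abs_nonneg _), mul_comm]
    have hQcost0 : (0:ℝ) ≤ ∫ z, |z.1 - z.2| ^ p ∂Q :=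
      integral_nonneg fun z => Real.rpow_nonneg (abs_nonneg _) p
    -- Q's cost^(1/p) is in S₁ and bounded by K * c
    have hmem : (∫ z, |z.1 - z.2| ^ p ∂Q) ^ (1 / p) ∈ S₁ :=
      ⟨Q, hQprob, hQ1, hQ2, rfl⟩
    have hle : (∫ z, |z.1 - z.2| ^ p ∂Q) ^ (1 / p)
        ≤ K * (∫ z, |z.1 - z.2| ^ p ∂P) ^ (1 / p) := by
      calc (∫ z, |z.1 - z.2| ^ p ∂Q) ^ (1 / p)
          ≤ ((∫ z, |z.1 - z.2| ^ p ∂P) * (∫ v, L v ^ p ∂ν)) ^ (1 / p) :=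
            Real.rpow_le_rpow hQcost0 hbound hp0'
        _ = K * (∫ z, |z.1 - z.2| ^ p ∂P) ^ (1 / p) := by
            rw [Real.mul_rpow hIP0 (hLν ▸ hIL0), hLν, mul_comm, hKdef]
    exact le_trans (csInf_le hS₁bdd hmem) hle
  -- finish: S₂ nonempty, use le_csInf
  have hS₂ne : {c : ℝ | ∃ P : Measure (ℝ × ℝ), IsProbabilityMeasure P ∧
      P.map Prod.fst = μ₁ ∧ P.map Prod.snd = μ₂ ∧
      c = (∫ z, |z.1 - z.2| ^ p ∂P) ^ (1 / p)}.Nonempty := by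
    haveI hprob₂ : IsProbabilityMeasure μ₂ := Measure.isProbabilityMeasure_map hU₂.aemeasurable
    refine ⟨(∫ z, |z.1 - z.2| ^ p ∂(μ₁.prod μ₂)) ^ (1 / p), μ₁.prod μ₂, by infer_instance,
      ?_, ?_, rfl⟩
    · rw [Measure.map_fst_prod]; simp
    · rw [Measure.map_snd_prod]; simp
  have hS₂bdd : BddBelow {c : ℝ | ∃ P : Measure (ℝ × ℝ), IsProbabilityMeasure P ∧
      P.map Prod.fst = μ₁ ∧ P.map Prod.snd = μ₂ ∧
      c = (∫ z, |z.1 - z.2| ^ p ∂P) ^ (1 / p)} := by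
    refine ⟨0, fun c hc => ?_⟩
    obtain ⟨P, _, _, _, rfl⟩ := hc
    exact Real.rpow_nonneg
      (integral_nonneg fun z => Real.rpow_nonneg (abs_nonneg _) p) _
  -- Wp LHS ≤ K * sInf S₂
  set S₂ := {c : ℝ | ∃ P : Measure (ℝ × ℝ), IsProbabilityMeasure P ∧
      P.map Prod.fst = μ₁ ∧ P.map Prod.snd = μ₂ ∧
      c = (∫ z, |z.1 - z.2| ^ p ∂P) ^ (1 / p)} with hS₂def
  open Pointwise in
  calc Wp p (μ.map (fun ω => φ (U₁ ω, V ω))) (μ.map (fun ω => φ (U₂ ω, V ω)))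
      ≤ sInf (K • S₂) := by
        refine le_csInf (hS₂ne.smul_set) ?_
        rintro b ⟨c, hc, rfl⟩
        simpa [smul_eq_mul] using key c hc
    _ = K * sInf S₂ := by rw [Real.sInf_smul_of_nonneg hK0, smul_eq_mul]
    _ = K * Wp p μ₁ μ₂ := rfl
end

section
/- Let 0 < γ ≤ 1 and p ≥ 1. For probability measures F₁, F₂ on [0,∞) with finite p-th moments, let d_{γ,p}(F₁,F₂) := W_p(s_#F₁, s_#F₂) where s(x) = x^γ. Then d_{γ,p}(F₁,F₂) ≤ W_p(F₁,F₂)^γ. -/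
open MeasureTheory Real

lemma holder_aux {x y γ : ℝ} (hx : 0 ≤ x) (hy : 0 ≤ y) (hγ0 : 0 < γ) (hγ1 : γ ≤ 1) :
    |x ^ γ - y ^ γ| ≤ |x - y| ^ γ := by
  wlog h : y ≤ x generalizing x y
  · rw [abs_sub_comm, abs_sub_comm x y]; exact this hy hx (le_of_not_ge h)
  have hxy : 0 ≤ x - y := sub_nonneg.2 h
  have h1 : y ^ γ ≤ x ^ γ := Real.rpow_le_rpow hy h hγ0.le
  rw [abs_of_nonneg (sub_nonneg.2 h1), abs_of_nonneg hxy]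
  have hsub : x ^ γ ≤ (x - y) ^ γ + y ^ γ := by
    have key : ((x - y).toNNReal + y.toNNReal) ^ γ ≤ (x - y).toNNReal ^ γ + y.toNNReal ^ γ :=
      NNReal.rpow_add_le_add_rpow _ _ hγ0.le hγ1
    have h2 := NNReal.coe_le_coe.2 key
    push_cast [NNReal.coe_rpow, Real.coe_toNNReal _ hxy, Real.coe_toNNReal _ hy] at h2
    calc x ^ γ = ((x - y) + y) ^ γ := by ring_nf
    _ ≤ (x - y) ^ γ + y ^ γ := h2
  linarith

theorem stmt13 (γ p : ℝ) (hγ : γ ∈ Set.Ioc (0 : ℝ) 1) (hp : 1 ≤ p)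
    (F₁ F₂ : Measure ℝ) [IsProbabilityMeasure F₁] [IsProbabilityMeasure F₂]
    (hsupp₁ : F₁ (Set.Iio 0) = 0) (hsupp₂ : F₂ (Set.Iio 0) = 0)
    (hmom₁ : Integrable (fun x => |x| ^ p) F₁) (hmom₂ : Integrable (fun x => |x| ^ p) F₂) :
    Wp p (F₁.map fun x => x ^ γ) (F₂.map fun x => x ^ γ) ≤ Wp p F₁ F₂ ^ γ := by
  obtain ⟨hγ0, hγ1⟩ := hγ
  have hp0 : (0:ℝ) < p := lt_of_lt_of_le one_pos hp
  unfold Wp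
  set B : Set ℝ := {c : ℝ | ∃ P : Measure (ℝ × ℝ), IsProbabilityMeasure P ∧
    P.map Prod.fst = F₁.map (fun x => x ^ γ) ∧ P.map Prod.snd = F₂.map (fun x => x ^ γ) ∧
    c = (∫ z, |z.1 - z.2| ^ p ∂P) ^ (1 / p)} with hBdef
  set A : Set ℝ := {c : ℝ | ∃ P : Measure (ℝ × ℝ), IsProbabilityMeasure P ∧
    P.map Prod.fst = F₁ ∧ P.map Prod.snd = F₂ ∧
    c = (∫ z, |z.1 - z.2| ^ p ∂P) ^ (1 / p)} with hAdef
  have hnonnegA : ∀ c ∈ A, (0:ℝ) ≤ c := by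
    rintro c ⟨P, _, _, _, rfl⟩
    exact Real.rpow_nonneg (integral_nonneg fun z => Real.rpow_nonneg (abs_nonneg _) _) _
  have hnonnegB : ∀ c ∈ B, (0:ℝ) ≤ c := by
    rintro c ⟨P, _, _, _, rfl⟩
    exact Real.rpow_nonneg (integral_nonneg fun z => Real.rpow_nonneg (abs_nonneg _) _) _
  have hcost_cont : Continuous fun z : ℝ × ℝ => |z.1 - z.2| ^ p :=
    (Real.continuous_rpow_const hp0.le).comp (continuous_fst.sub continuous_snd).abs
  have hs_cont : Continuous fun x : ℝ => x ^ γ := Real.continuous_rpow_const hγ0.le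
  have hs_meas : Measurable fun x : ℝ => x ^ γ := hs_cont.measurable
  have key : ∀ c ∈ A, sInf B ≤ c ^ γ := by
    rintro c ⟨P, hP, h1, h2, rfl⟩
    haveI := hP
    set f : ℝ × ℝ → ℝ := fun z => |z.1 - z.2| ^ p with hfdef
    have hf_nonneg : ∀ z, 0 ≤ f z := fun z => Real.rpow_nonneg (abs_nonneg _) _
    have hI0 : 0 ≤ ∫ z, f z ∂P := integral_nonneg hf_nonneg
    have hae1 : ∀ᵐ z ∂P, 0 ≤ z.1 := by
      have h0 : P (Prod.fst ⁻¹' Set.Iio 0) = 0 := by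
        rw [← Measure.map_apply measurable_fst measurableSet_Iio, h1]; exact hsupp₁
      refine (measure_mono_null ?_ h0 : P {z : ℝ × ℝ | ¬ (0 ≤ z.1)} = 0)
      intro z hz; simpa [Set.mem_setOf_eq] using not_le.mp hz
    have hae2 : ∀ᵐ z ∂P, 0 ≤ z.2 := by
      have h0 : P (Prod.snd ⁻¹' Set.Iio 0) = 0 := by
        rw [← Measure.map_apply measurable_snd measurableSet_Iio, h2]; exact hsupp₂
      refine (measure_mono_null ?_ h0 : P {z : ℝ × ℝ | ¬ (0 ≤ z.2)} = 0)
      intro z hz; simpa [Set.mem_setOf_eq] using not_le.mp hz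
    have hm1 : Integrable (fun z : ℝ × ℝ => |z.1| ^ p) P := by
      rw [← h1] at hmom₁
      have := (integrable_map_measure
        ((Real.continuous_rpow_const hp0.le).comp continuous_abs).aestronglyMeasurable
        measurable_fst.aemeasurable).mp hmom₁
      exact this
    have hm2 : Integrable (fun z : ℝ × ℝ => |z.2| ^ p) P := by
      rw [← h2] at hmom₂
      have := (integrable_map_measure
        ((Real.continuous_rpow_const hp0.le).comp continuous_abs).aestronglyMeasurable
        measurable_snd.aemeasurable).mp hmom₂
      exact this
    have hf_int : Integrable f P := by
      refine Integrable.mono' ((hm1.add hm2).const_mul (2 ^ p))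
        hcost_cont.aestronglyMeasurable ?_
      filter_upwards with z
      rw [Real.norm_eq_abs, abs_of_nonneg (hf_nonneg z)]
      have hb : |z.1 - z.2| ≤ 2 * max |z.1| |z.2| := by
        have := abs_sub z.1 z.2
        rcases le_total |z.1| |z.2| with h | h
        · rw [max_eq_right h]; simp at this ⊢; linarith [abs_sub_abs_le_abs_sub z.1 z.2]
        · rw [max_eq_left h]; simp at this ⊢; linarith [abs_sub_abs_le_abs_sub z.1 z.2]
      calc f z ≤ (2 * max |z.1| |z.2|) ^ p :=
            Real.rpow_le_rpow (abs_nonneg _) hb hp0.le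
      _ = 2 ^ p * (max |z.1| |z.2|) ^ p :=
            Real.mul_rpow (by norm_num) (le_max_iff.2 (Or.inl (abs_nonneg _)))
      _ ≤ 2 ^ p * (|z.1| ^ p + |z.2| ^ p) := by
            have : (max |z.1| |z.2|) ^ p ≤ |z.1| ^ p + |z.2| ^ p := by
              rcases le_total |z.1| |z.2| with h | h
              · rw [max_eq_right h]
                exact le_add_of_nonneg_left (Real.rpow_nonneg (abs_nonneg _) _)
              · rw [max_eq_left h]
                exact le_add_of_nonneg_right (Real.rpow_nonneg (abs_nonneg _) _)
            have h2p : (0:ℝ) ≤ 2 ^ p := Real.rpow_nonneg (by norm_num) _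
            nlinarith [this]
    have hgf_int : Integrable (fun z => (f z) ^ γ) P := by
      refine Integrable.mono' (hf_int.add (integrable_const 1))
        (((Real.continuous_rpow_const hγ0.le).comp hcost_cont).aestronglyMeasurable) ?_
      filter_upwards with z
      rw [Real.norm_eq_abs, abs_of_nonneg (Real.rpow_nonneg (hf_nonneg z) _)]
      show (f z) ^ γ ≤ f z + 1
      rcases le_total (f z) 1 with h | h
      · have : (f z) ^ γ ≤ 1 := Real.rpow_le_one (hf_nonneg z) h hγ0.le
        linarith [hf_nonneg z]
      · have : (f z) ^ γ ≤ (f z) ^ (1:ℝ) := Real.rpow_le_rpow_of_exponent_le h hγ1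
        rw [Real.rpow_one] at this
        linarith
    have hJensen : (∫ z, (f z) ^ γ ∂P) ≤ (∫ z, f z ∂P) ^ γ := by
      have hconc := Real.concaveOn_rpow hγ0.le hγ1
      exact hconc.le_map_integral (Real.continuous_rpow_const hγ0.le).continuousOn
        isClosed_Ici (ae_of_all _ fun z => hf_nonneg z) hf_int hgf_int
    have hpt : ∀ᵐ z ∂P, |z.1 ^ γ - z.2 ^ γ| ^ p ≤ (f z) ^ γ := by
      filter_upwards [hae1, hae2] with z h1z h2z
      have h := holder_aux h1z h2z hγ0 hγ1
      calc |z.1 ^ γ - z.2 ^ γ| ^ p ≤ (|z.1 - z.2| ^ γ) ^ p :=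
            Real.rpow_le_rpow (abs_nonneg _) h hp0.le
      _ = (f z) ^ γ := by
            rw [hfdef]
            rw [← Real.rpow_mul (abs_nonneg _), mul_comm, Real.rpow_mul (abs_nonneg _)]
    have hmapped_int : Integrable (fun z : ℝ × ℝ => |z.1 ^ γ - z.2 ^ γ| ^ p) P := by
      refine Integrable.mono' hgf_int
        ((Real.continuous_rpow_const hp0.le).comp
          ((hs_cont.comp continuous_fst).sub (hs_cont.comp continuous_snd)).abs).aestronglyMeasurable ?_
      filter_upwards [hpt] with z hz
      rw [Real.norm_eq_abs, abs_of_nonneg (Real.rpow_nonneg (abs_nonneg _) _)]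
      exact hz
    have hJle : (∫ z, |z.1 ^ γ - z.2 ^ γ| ^ p ∂P) ≤ (∫ z, f z ∂P) ^ γ :=
      (integral_mono_ae hmapped_int hgf_int hpt).trans hJensen
    set g : ℝ × ℝ → ℝ × ℝ := fun z => (z.1 ^ γ, z.2 ^ γ) with hgdef
    have hg : Measurable g := (hs_meas.comp measurable_fst).prodMk (hs_meas.comp measurable_snd)
    haveI : IsProbabilityMeasure (P.map g) := Measure.isProbabilityMeasure_map hg.aemeasurable
    have hQ1 : (P.map g).map Prod.fst = F₁.map (fun x => x ^ γ) := by
      rw [Measure.map_map measurable_fst hg, ← h1, Measure.map_map hs_meas measurable_fst]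
      rfl
    have hQ2 : (P.map g).map Prod.snd = F₂.map (fun x => x ^ γ) := by
      rw [Measure.map_map measurable_snd hg, ← h2, Measure.map_map hs_meas measurable_snd]
      rfl
    have hQcost : (∫ w, |w.1 - w.2| ^ p ∂(P.map g)) = ∫ z, |z.1 ^ γ - z.2 ^ γ| ^ p ∂P := by
      rw [integral_map hg.aemeasurable hcost_cont.aestronglyMeasurable]
    have hmemB : (∫ w, |w.1 - w.2| ^ p ∂(P.map g)) ^ (1 / p) ∈ B :=
      ⟨P.map g, inferInstance, hQ1, hQ2, rfl⟩
    have hBbdd : BddBelow B := ⟨0, fun c hc => hnonnegB c hc⟩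
    calc sInf B ≤ (∫ w, |w.1 - w.2| ^ p ∂(P.map g)) ^ (1 / p) := csInf_le hBbdd hmemB
    _ ≤ ((∫ z, f z ∂P) ^ γ) ^ (1 / p) := by
        rw [hQcost]
        exact Real.rpow_le_rpow (integral_nonneg fun z => Real.rpow_nonneg (abs_nonneg _) _)
          hJle (by positivity)
    _ = ((∫ z, f z ∂P) ^ (1 / p)) ^ γ := by
        rw [← Real.rpow_mul hI0, mul_comm, Real.rpow_mul hI0]
  have hA_ne : A.Nonempty := by
    refine ⟨_, F₁.prod F₂, inferInstance, ?_, ?_, rfl⟩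
    · simp [Measure.map_fst_prod]
    · simp [Measure.map_snd_prod]
  have htend : Filter.Tendsto (fun ε : ℝ => (sInf A + ε) ^ γ) (nhdsWithin 0 (Set.Ioi 0))
      (nhds ((sInf A) ^ γ)) := by
    have h1 : Filter.Tendsto (fun ε : ℝ => sInf A + ε) (nhdsWithin 0 (Set.Ioi 0))
        (nhds (sInf A)) := by
      have h2 : Filter.Tendsto (fun ε : ℝ => sInf A + ε) (nhds 0) (nhds (sInf A)) := by
        simpa using (Continuous.tendsto (by continuity : Continuous fun ε : ℝ => sInf A + ε) 0)
      exact h2.mono_left nhdsWithin_le_nhds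
    exact ((Real.continuousAt_rpow_const _ γ (Or.inr hγ0.le)).tendsto.comp h1)
  refine ge_of_tendsto htend ?_
  filter_upwards [self_mem_nhdsWithin] with ε hε
  obtain ⟨c, hcA, hlt⟩ := Real.lt_sInf_add_pos hA_ne (Set.mem_Ioi.mp hε)
  exact (key c hcA).trans (Real.rpow_le_rpow (hnonnegA c hcA) hlt.le hγ0.le)
end

section
/- Let P be a probability measure on a measurable space X and f : X → ℝ measurable with ∫ e^f dP < ∞ and ∫ |f| e^f dP < ∞. Define Q* by dQ*/dP = e^f / ∫ e^f dP. Then for every probability measure Q ≪ P with finite relative entropy D(Q‖P) and ∫|f| dQ < ∞, one has ∫ f dQ - D(Q‖P) ≤ log ∫ e^f dP, with equality when Q = Q*. -/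
open MeasureTheory Real

lemma my_integral_llr_nonneg {α : Type*} [MeasurableSpace α] {μ ν : Measure α}
    [IsProbabilityMeasure μ] [IsProbabilityMeasure ν] (hμν : μ ≪ ν)
    (h : Integrable (llr μ ν) μ) : 0 ≤ ∫ x, llr μ ν x ∂μ := by
  have hle : (fun x => 1 - (ν.rnDeriv μ x).toReal) ≤ᵐ[μ] llr μ ν := by
    filter_upwards [neg_llr hμν, Measure.rnDeriv_pos' hμν,
      Measure.rnDeriv_lt_top ν μ] with x h1 h2 h3
    have ht : 0 < (ν.rnDeriv μ x).toReal := ENNReal.toReal_pos h2.ne' h3.ne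
    have hlog : Real.log ((ν.rnDeriv μ x).toReal) ≤ (ν.rnDeriv μ x).toReal - 1 :=
      Real.log_le_sub_one_of_pos ht
    have h1' : - llr μ ν x = llr ν μ x := h1
    have : llr ν μ x = Real.log ((ν.rnDeriv μ x).toReal) := rfl
    linarith [h1' ▸ this ▸ hlog, hlog, h1'.symm ▸ (rfl : llr ν μ x = llr ν μ x)]
  have hi : Integrable (fun x => 1 - (ν.rnDeriv μ x).toReal) μ :=
    (integrable_const 1).sub Measure.integrable_toReal_rnDeriv
  have hint : ∫ x, (1 - (ν.rnDeriv μ x).toReal) ∂μ ≤ ∫ x, llr μ ν x ∂μ :=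
    integral_mono_ae hi h hle
  have hval : ∫ x, (ν.rnDeriv μ x).toReal ∂μ ≤ 1 := by
    rw [Measure.integral_toReal_rnDeriv']
    have h0 : (0:ℝ) ≤ (ν.singularPart μ Set.univ).toReal := ENNReal.toReal_nonneg
    simp only [measure_univ, ENNReal.toReal_one, probReal_univ]
    linarith [measureReal_nonneg (μ := ν.singularPart μ) (s := Set.univ)]
  have : (0:ℝ) ≤ ∫ x, (1 - (ν.rnDeriv μ x).toReal) ∂μ := by
    rw [integral_sub (integrable_const 1) Measure.integrable_toReal_rnDeriv]
    simp only [integral_const, measure_univ, ENNReal.toReal_one, probReal_univ, smul_eq_mul, one_mul]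
    linarith
  linarith

theorem stmt19 {α : Type*} [MeasurableSpace α] (P : Measure α) [IsProbabilityMeasure P]
    (f : α → ℝ) (hf : Measurable f)
    (h1 : Integrable (fun x => Real.exp (f x)) P)
    (h2 : Integrable (fun x => |f x| * Real.exp (f x)) P) :
    (∀ Q : Measure α, IsProbabilityMeasure Q → Q ≪ P →
        Integrable (fun x => Real.log (Q.rnDeriv P x).toReal) Q →
        Integrable f Q →
        (∫ x, f x ∂Q) - ∫ x, Real.log (Q.rnDeriv P x).toReal ∂Q
          ≤ Real.log (∫ x, Real.exp (f x) ∂P)) ∧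
    ((∫ x, f x
        ∂(P.withDensity fun x =>
            ENNReal.ofReal (Real.exp (f x) / ∫ y, Real.exp (f y) ∂P))) -
      ∫ x, Real.log
          (((P.withDensity fun x =>
              ENNReal.ofReal (Real.exp (f x) / ∫ y, Real.exp (f y) ∂P)).rnDeriv P x).toReal)
        ∂(P.withDensity fun x =>
            ENNReal.ofReal (Real.exp (f x) / ∫ y, Real.exp (f y) ∂P))
        = Real.log (∫ x, Real.exp (f x) ∂P)) := by
  have hZpos : 0 < ∫ x, Real.exp (f x) ∂P := integral_exp_pos h1
  have htilted : (P.withDensity fun x =>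
      ENNReal.ofReal (Real.exp (f x) / ∫ y, Real.exp (f y) ∂P)) = P.tilted f := rfl
  have hPM : IsProbabilityMeasure (P.tilted f) := isProbabilityMeasure_tilted h1
  constructor
  · intro Q hQ hQP hllr hfQ
    have hQt : Q ≪ P.tilted f := hQP.trans (absolutelyContinuous_tilted h1)
    have hint : Integrable (llr Q (P.tilted f)) Q :=
      integrable_llr_tilted_right hQP hfQ hllr h1
    have heq : ∫ x, llr Q (P.tilted f) x ∂Q
        = ∫ x, llr Q P x ∂Q - ∫ x, f x ∂Q + Real.log (∫ x, Real.exp (f x) ∂P) :=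
      integral_llr_tilted_right hQP hfQ h1 hllr
    have hnn : 0 ≤ ∫ x, llr Q (P.tilted f) x ∂Q := my_integral_llr_nonneg hQt hint
    have : (∫ x, Real.log (Q.rnDeriv P x).toReal ∂Q) = ∫ x, llr Q P x ∂Q := rfl
    rw [this]
    linarith
  · rw [htilted]
    have hfi : Integrable f (P.tilted f) := by
      rw [Measure.tilted, integrable_withDensity_iff (by measurability)
        (Filter.Eventually.of_forall fun x => ENNReal.ofReal_lt_top)]
      have hb : Integrable (fun x => |f x| * Real.exp (f x) / (∫ y, Real.exp (f y) ∂P)) P :=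
        h2.div_const _
      refine hb.mono' ?_ ?_
      · exact (hf.mul ((hf.exp.div_const _).ennreal_ofReal.ennreal_toReal)).aestronglyMeasurable
      · refine Filter.Eventually.of_forall fun x => ?_
        rw [ENNReal.toReal_ofReal (by positivity), Real.norm_eq_abs, abs_mul,
          abs_of_nonneg (by positivity : (0:ℝ) ≤ Real.exp (f x) / ∫ y, Real.exp (f y) ∂P),
          mul_div_assoc]
    have hkey : (fun x => Real.log (((P.tilted f).rnDeriv P x).toReal))
        =ᵐ[P.tilted f] fun x => f x - Real.log (∫ x, Real.exp (f x) ∂P) :=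
      (tilted_absolutelyContinuous P f).ae_le (log_rnDeriv_tilted_left_self h1)
    rw [integral_congr_ae hkey,
      integral_sub hfi (integrable_const _)]
    simp [measure_univ]
end
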